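/- arXiv:2605.24572 — 5 statements merged into one kernel-verified Lean document; each statement's English description precedes it below -/
import Mathlib

section
/- Let λ₁ ≥ λ₂ ≥ 0 be integers and H_m(z,w) = Σ_{i+j=m, i,j≥0} z^i w^j (with H_m = 0 for m < 0). Then H_{λ₁}(z,w)·H_{λ₂}(z,w) − H_{λ₁+1}(z,w)·H_{λ₂−1}(z,w) = Σ_{k=λ₂}^{λ₁} z^{λ₁+λ₂−k} w^{k}. -/
/-- Jacobi–Trudi in two variables: `H_{λ₁}H_{λ₂} − H_{λ₁+1}H_{λ₂−1}
= ∑_{k=λ₂}^{λ₁} z^{λ₁+λ₂−k} w^k`, where `H_m(z,w) = ∑_{i=0}^m z^i w^{m−i}`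
and `H_{-1} = 0`. -/
theorem stmt1 {R : Type*} [CommRing R] (z w : R) (l1 l2 : ℕ) (h : l2 ≤ l1)
    (H : ℕ → R) (hH : ∀ m, H m = ∑ i ∈ Finset.range (m + 1), z ^ i * w ^ (m - i)) :
    H l1 * H l2 - (if l2 = 0 then 0 else H (l1 + 1) * H (l2 - 1))
      = ∑ k ∈ Finset.Icc l2 l1, z ^ (l1 + l2 - k) * w ^ k := by
  have rec1 : ∀ m, H (m + 1) = w ^ (m + 1) + z * H m := by
    intro m
    rw [hH (m + 1), hH m, Finset.sum_range_succ', Finset.mul_sum]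
    have : ∀ i ∈ Finset.range (m + 1),
        z ^ (i + 1) * w ^ (m + 1 - (i + 1)) = z * (z ^ i * w ^ (m - i)) := by
      intro i _
      rw [show m + 1 - (i + 1) = m - i by omega]; ring
    rw [Finset.sum_congr rfl this]
    simp [add_comm]
  rcases Nat.eq_zero_or_pos l2 with h0 | h0
  · subst h0
    rw [if_pos rfl, sub_zero, hH 0, hH l1]
    simp only [zero_add, Finset.range_one, Finset.sum_singleton, pow_zero, Nat.sub_zero,
      one_mul, mul_one]
    apply Finset.sum_nbij' (fun i => l1 - i) (fun k => l1 - k)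
    · intro a ha; simp only [Finset.mem_range, Nat.lt_succ_iff, Finset.mem_Icc] at *; omega
    · intro a ha; simp only [Finset.mem_range, Nat.lt_succ_iff, Finset.mem_Icc] at *; omega
    · intro a ha; simp only [Finset.mem_range, Nat.lt_succ_iff] at ha; omega
    · intro a ha; simp only [Finset.mem_Icc] at ha; omega
    · intro a ha
      simp only [Finset.mem_range, Nat.lt_succ_iff] at ha
      rw [show l1 + 0 - (l1 - a) = a by omega]
  · obtain ⟨n, rfl⟩ : ∃ n, l2 = n + 1 := ⟨l2 - 1, by omega⟩
    rw [if_neg (by omega)]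
    have step : H l1 * H (n + 1) - H (l1 + 1) * H (n + 1 - 1)
        = H l1 * w ^ (n + 1) - w ^ (l1 + 1) * H n := by
      simp only [Nat.add_sub_cancel]
      rw [rec1 n, rec1 l1]; ring
    rw [step, hH l1, hH n, Finset.sum_mul, Finset.mul_sum]
    have hsplit : Finset.range (l1 + 1)
        = Finset.range (n + 1) ∪ Finset.Icc (n + 1) l1 := by
      ext x; simp only [Finset.mem_range, Finset.mem_union, Finset.mem_Icc,
        Nat.lt_succ_iff]; omega
    rw [hsplit, Finset.sum_union (by
      rw [Finset.disjoint_left]; intro a ha hb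
      simp only [Finset.mem_range, Finset.mem_Icc] at ha hb; omega)]
    have hcancel : ∑ i ∈ Finset.range (n + 1), z ^ i * w ^ (l1 - i) * w ^ (n + 1)
        = ∑ i ∈ Finset.range (n + 1), w ^ (l1 + 1) * (z ^ i * w ^ (n - i)) := by
      apply Finset.sum_congr rfl
      intro i hi
      simp only [Finset.mem_range, Nat.lt_succ_iff] at hi
      have hw : w ^ (l1 - i) * w ^ (n + 1) = w ^ (l1 + 1) * w ^ (n - i) := by
        rw [← pow_add, ← pow_add]; congr 1; omega
      rw [mul_assoc, hw]; ring
    rw [hcancel, add_sub_cancel_left]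
    apply Finset.sum_nbij' (fun k => l1 + n + 1 - k) (fun k => l1 + n + 1 - k)
    · intro a ha; simp only [Finset.mem_Icc] at *; omega
    · intro a ha; simp only [Finset.mem_Icc] at *; omega
    · intro a ha; simp only [Finset.mem_Icc] at ha; omega
    · intro a ha; simp only [Finset.mem_Icc] at ha; omega
    · intro a ha
      simp only [Finset.mem_Icc] at ha
      have hw : w ^ (l1 - a) * w ^ (n + 1) = w ^ (l1 + n + 1 - a) := by
        rw [← pow_add]; congr 1; omega
      rw [mul_assoc, hw, show l1 + (n + 1) - (l1 + n + 1 - a) = a by omega]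
end

section
/- Let f(T) = a₀ + ⋯ + a_dT^d have nonnegative real coefficients, and set p(z,w) = f(z)f(w). Then p(z,w) is Schur positive (i.e., a nonnegative linear combination of two-variable Schur polynomials S_{(λ₁,λ₂)}) if and only if f is log-concave and has no internal zeros. -/
open Finset

private noncomputable def Sch (m n : ℕ) (z w : ℝ) : ℝ :=
  ∑ k ∈ Finset.Icc n m, z ^ (m + n - k) * w ^ k

private lemma Sch_diag (n : ℕ) (z w : ℝ) : Sch n n z w = z ^ n * w ^ n := by
  simp [Sch]

private lemma Sch_empty (n : ℕ) (z w : ℝ) : Sch n (n+1) z w = 0 := by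
  simp [Sch]

private lemma Sch_split (m n : ℕ) (h : n < m) (z w : ℝ) :
    Sch m n z w = z ^ m * w ^ n + z ^ n * w ^ m + Sch (m-1) (n+1) z w := by
  unfold Sch
  have h1 : Finset.Icc n m = Finset.Ico n (m+1) := by rw [Finset.Ico_add_one_right_eq_Icc]
  have h2 : Finset.Icc (n+1) (m-1) = Finset.Ico (n+1) m := by
    have : m = (m-1)+1 := by omega
    rw [this, Finset.Ico_add_one_right_eq_Icc]
    simp
  rw [h1, h2, Finset.sum_eq_sum_Ico_succ_bot (by omega), Finset.sum_Ico_succ_top (by omega)]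
  have e1 : m + n - n = m := by omega
  have e2 : m + n - m = n := by omega
  rw [e1, e2]
  have e3 : ∀ k ∈ Finset.Ico (n+1) m,
      z ^ (m + n - k) * w ^ k = z ^ (m - 1 + (n + 1) - k) * w ^ k := by
    intro k hk; rw [mem_Ico] at hk
    congr 2
    omega
  rw [Finset.sum_congr rfl e3]
  ring

private lemma polyExt (N : ℕ) (u : ℕ → ℕ → ℝ)
    (h : ∀ z w : ℝ, ∑ i ∈ range N, ∑ j ∈ range N, u i j * z ^ i * w ^ j = 0) :
    ∀ i < N, ∀ j < N, u i j = 0 := by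
  have coeffsum : ∀ (c : ℕ → ℝ) (i : ℕ), i < N →
      (∑ k ∈ range N, Polynomial.C (c k) * Polynomial.X ^ k).coeff i = c i := by
    intro c i hi
    rw [Polynomial.finset_sum_coeff]
    simp only [Polynomial.coeff_C_mul, Polynomial.coeff_X_pow]
    rw [Finset.sum_eq_single i]
    · simp
    · intro b _ hb; simp [Ne.symm hb]
    · intro hni; exact absurd (mem_range.mpr hi) hni
  intro i hi j hj
  have h1 : ∀ w : ℝ, ∑ j ∈ range N, u i j * w ^ j = 0 := by
    intro w
    have hP : (∑ k ∈ range N, Polynomial.C (∑ j ∈ range N, u k j * w ^ j) * Polynomial.X ^ k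
        : Polynomial ℝ) = 0 := by
      apply Polynomial.funext
      intro z
      rw [Polynomial.eval_finset_sum]
      simp only [Polynomial.eval_mul, Polynomial.eval_C, Polynomial.eval_pow, Polynomial.eval_X,
        Polynomial.eval_zero]
      rw [← h z w]
      apply Finset.sum_congr rfl
      intro k _
      rw [Finset.sum_mul]
      apply Finset.sum_congr rfl
      intro l _
      ring
    have h2 : (∑ k ∈ range N, Polynomial.C (∑ j ∈ range N, u k j * w ^ j) * Polynomial.X ^ k
        : Polynomial ℝ).coeff i = (0 : Polynomial ℝ).coeff i := by rw [hP]
    rwa [coeffsum _ i hi, Polynomial.coeff_zero] at h2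
  have hP2 : (∑ k ∈ range N, Polynomial.C (u i k) * Polynomial.X ^ k : Polynomial ℝ) = 0 := by
    apply Polynomial.funext
    intro w
    rw [Polynomial.eval_finset_sum]
    simpa using h1 w
  have h3 : (∑ k ∈ range N, Polynomial.C (u i k) * Polynomial.X ^ k
      : Polynomial ℝ).coeff j = (0 : Polynomial ℝ).coeff j := by rw [hP2]
  rwa [coeffsum _ j hj, Polynomial.coeff_zero] at h3

private lemma ratioLem (a : ℕ → ℝ) (hlc : ∀ i : ℕ, 1 ≤ i → a (i - 1) * a (i + 1) ≤ a i ^ 2)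
    (i j : ℕ) (hij : i ≤ j) (hpos : ∀ t, i ≤ t → t ≤ j + 1 → 0 < a t) :
    a (j + 1) * a i ≤ a j * a (i + 1) := by
  induction j, hij using Nat.le_induction with
  | base => exact le_of_eq (mul_comm _ _)
  | succ j hij ih =>
    have hposj : ∀ t, i ≤ t → t ≤ j + 1 → 0 < a t := fun t ht ht' => hpos t ht (by omega)
    have IH := ih hposj
    have hlcj := hlc (j + 1) (by omega)
    simp only [Nat.add_sub_cancel] at hlcj
    have p1 : 0 < a j := hpos j (by omega) (by omega)
    have p2 : 0 < a (j+1) := hpos (j+1) (by omega) (by omega)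
    have pi : 0 < a i := hpos i le_rfl (by omega)
    nlinarith [mul_le_mul hlcj IH (by positivity) (by positivity)]

private lemma keyIneq (d : ℕ) (a : ℕ → ℝ) (hnn : ∀ k, 0 ≤ a k) (hdeg : ∀ k, d < k → a k = 0)
    (hlc : ∀ i : ℕ, 1 ≤ i → a (i - 1) * a (i + 1) ≤ a i ^ 2)
    (hniz : ¬ ∃ i j k : ℕ, i < j ∧ j < k ∧ k ≤ d ∧ a i ≠ 0 ∧ a j = 0 ∧ a k ≠ 0)
    (m n : ℕ) (hn : 1 ≤ n) (hnm : n ≤ m) :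
    a (m + 1) * a (n - 1) ≤ a m * a n := by
  rcases eq_or_ne (a (m+1)) 0 with h1 | h1
  · rw [h1, zero_mul]; exact mul_nonneg (hnn m) (hnn n)
  rcases eq_or_ne (a (n-1)) 0 with h2 | h2
  · rw [h2, mul_zero]; exact mul_nonneg (hnn m) (hnn n)
  have hmd : m + 1 ≤ d := by
    by_contra h; exact h1 (hdeg _ (by omega))
  have hpos : ∀ t, n - 1 ≤ t → t ≤ m + 1 → 0 < a t := by
    intro t ht ht'
    rcases eq_or_lt_of_le (hnn t) with h | h
    · exfalso
      rcases eq_or_lt_of_le ht with rfl | ht1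
      · exact h2 h.symm
      rcases eq_or_lt_of_le ht' with rfl | ht2
      · exact h1 h.symm
      · exact hniz ⟨n - 1, t, m + 1, ht1, ht2, hmd, h2, h.symm, h1⟩
    · exact h
  have := ratioLem a hlc (n - 1) m (by omega) (fun t ht ht' => hpos t ht ht')
  have e : n - 1 + 1 = n := by omega
  rwa [e] at this

private lemma chainLem (a : ℕ → ℝ)
    (key : ∀ m n : ℕ, 1 ≤ n → n ≤ m → a (m + 1) * a (n - 1) ≤ a m * a n)
    (i k : ℕ) : ∀ t, i + 2 * t ≤ k → a k * a i ≤ a (k - t) * a (i + t) := by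
  intro t
  induction t with
  | zero => simp
  | succ t ih =>
    intro ht
    have h1 := ih (by omega)
    have h2 := key (k - t - 1) (i + t + 1) (by omega) (by omega)
    have e1 : k - t - 1 + 1 = k - t := by omega
    have e2 : i + t + 1 - 1 = i + t := by omega
    have e3 : k - t - 1 = k - (t+1) := by omega
    rw [e1, e2, e3] at h2
    calc a k * a i ≤ a (k - t) * a (i + t) := h1
      _ ≤ a (k - (t+1)) * a (i + t + 1) := h2
      _ = a (k - (t+1)) * a (i + (t+1)) := by ring_nf

private lemma revIdentity (d : ℕ) (a : ℕ → ℝ) (hdeg : ∀ k, d < k → a k = 0) (z w : ℝ) :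
    (∑ k ∈ range (d + 1), a k * z ^ k) * (∑ k ∈ range (d + 1), a k * w ^ k)
    = ∑ p ∈ ((range (d+2)) ×ˢ (range (d+2))).filter (fun p => p.2 ≤ p.1),
        (a p.1 * a p.2 - (if p.2 = 0 then 0 else a (p.1+1) * a (p.2-1))) * Sch p.1 p.2 z w := by
  set F : Finset (ℕ × ℕ) := ((range (d+2)) ×ˢ (range (d+2))).filter (fun p => p.2 ≤ p.1) with hF
  set F0 : Finset (ℕ × ℕ) := ((range (d+1)) ×ˢ (range (d+1))).filter (fun p => p.2 ≤ p.1) with hF0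
  set F2 : Finset (ℕ × ℕ) := ((range (d+1)) ×ˢ (range (d+1))).filter (fun p => p.2 < p.1) with hF2
  have step1 : ∑ p ∈ F, (a p.1 * a p.2 - (if p.2 = 0 then 0 else a (p.1+1) * a (p.2-1))) * Sch p.1 p.2 z w
      = (∑ p ∈ F, a p.1 * a p.2 * Sch p.1 p.2 z w)
        - ∑ p ∈ F, (if p.2 = 0 then 0 else a (p.1+1) * a (p.2-1)) * Sch p.1 p.2 z w := by
    rw [← Finset.sum_sub_distrib]
    apply Finset.sum_congr rfl
    intro p _
    ring
  have s1eq : ∑ p ∈ F, a p.1 * a p.2 * Sch p.1 p.2 z w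
      = ∑ p ∈ F0, a p.1 * a p.2 * Sch p.1 p.2 z w := by
    symm
    apply Finset.sum_subset
    · intro p hp
      simp only [hF0, hF, mem_filter, mem_product, mem_range] at hp ⊢
      omega
    · intro p hp hnp
      simp only [hF0, hF, mem_filter, mem_product, mem_range] at hp hnp
      have : a p.1 = 0 := hdeg p.1 (by omega)
      rw [this]; ring
  have s2eq : ∑ p ∈ F, (if p.2 = 0 then 0 else a (p.1+1) * a (p.2-1)) * Sch p.1 p.2 z w
      = ∑ p ∈ F2, a p.1 * a p.2 * Sch (p.1 - 1) (p.2 + 1) z w := by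
    rw [Finset.sum_congr rfl (g := fun p => if p.2 ≠ 0 then a (p.1+1) * a (p.2-1) * Sch p.1 p.2 z w else 0)
      (fun p _ => by split_ifs with h1 h2 <;> simp_all <;> ring)]
    rw [← Finset.sum_filter]
    have := Finset.sum_nbij' (i := fun p : ℕ × ℕ => (p.1 + 1, p.2 - 1))
      (j := fun q : ℕ × ℕ => (q.1 - 1, q.2 + 1))
      (s := F.filter (fun p => p.2 ≠ 0))
      (t := ((range (d+3)) ×ˢ (range (d+1))).filter (fun q => q.2 + 2 ≤ q.1))
      (f := fun p => a (p.1+1) * a (p.2-1) * Sch p.1 p.2 z w)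
      (g := fun q => a q.1 * a q.2 * Sch (q.1 - 1) (q.2 + 1) z w)
      (by intro p hp; simp only [hF, mem_filter, mem_product, mem_range] at hp ⊢; omega)
      (by intro q hq; simp only [hF, mem_filter, mem_product, mem_range] at hq ⊢; omega)
      (by intro p hp; simp only [hF, mem_filter, mem_product, mem_range] at hp; ext <;> simp <;> omega)
      (by intro q hq; simp only [hF, mem_filter, mem_product, mem_range] at hq; ext <;> simp <;> omega)
      (by
        intro p hp
        simp only [hF, mem_filter, mem_product, mem_range] at hp
        have e1 : p.1 + 1 - 1 = p.1 := by omega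
        have e2 : p.2 - 1 + 1 = p.2 := by omega
        simp only [e1, e2])
    rw [this]
    have ext1 : ∑ q ∈ ((range (d+3)) ×ˢ (range (d+1))).filter (fun q => q.2 + 2 ≤ q.1),
          a q.1 * a q.2 * Sch (q.1 - 1) (q.2 + 1) z w
        = ∑ q ∈ ((range (d+3)) ×ˢ (range (d+1))).filter (fun q => q.2 < q.1),
          a q.1 * a q.2 * Sch (q.1 - 1) (q.2 + 1) z w := by
      apply Finset.sum_subset
      · intro q hq
        simp only [mem_filter, mem_product, mem_range] at hq ⊢
        omega
      · intro q hq hnq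
        simp only [mem_filter, mem_product, mem_range] at hq hnq
        have hq1 : q.1 = q.2 + 1 := by omega
        rw [hq1]
        simp [Sch_empty]
    rw [ext1]
    symm
    apply Finset.sum_subset
    · intro q hq
      simp only [hF2, mem_filter, mem_product, mem_range] at hq ⊢
      omega
    · intro q hq hnq
      simp only [hF2, mem_filter, mem_product, mem_range] at hq hnq
      have : a q.1 = 0 := hdeg q.1 (by omega)
      rw [this]; ring
  rw [step1, s1eq, s2eq]
  have split0 := Finset.sum_filter_add_sum_filter_not F0 (fun p => p.2 < p.1)
    (fun p => a p.1 * a p.2 * Sch p.1 p.2 z w)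
  have hFF : F0.filter (fun p => p.2 < p.1) = F2 := by
    rw [hF0, hF2, Finset.filter_filter]
    apply Finset.filter_congr
    intro p _
    constructor
    · rintro ⟨_, h⟩; exact h
    · intro h; exact ⟨le_of_lt h, h⟩
  rw [hFF] at split0
  rw [← split0]
  have diag : ∑ p ∈ F0.filter (fun p => ¬ p.2 < p.1), a p.1 * a p.2 * Sch p.1 p.2 z w
      = ∑ p ∈ F0.filter (fun p => ¬ p.2 < p.1), a p.1 * a p.2 * (z ^ p.1 * w ^ p.2) := by
    apply Finset.sum_congr rfl
    intro p hp
    simp only [hF0, mem_filter, mem_product, mem_range] at hp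
    have : p.2 = p.1 := by omega
    rw [this, Sch_diag]
  rw [diag]
  have off : ∑ p ∈ F2, a p.1 * a p.2 * Sch p.1 p.2 z w
        - ∑ p ∈ F2, a p.1 * a p.2 * Sch (p.1 - 1) (p.2 + 1) z w
      = ∑ p ∈ F2, a p.1 * a p.2 * (z ^ p.1 * w ^ p.2 + z ^ p.2 * w ^ p.1) := by
    rw [← Finset.sum_sub_distrib]
    apply Finset.sum_congr rfl
    intro p hp
    simp only [hF2, mem_filter, mem_product, mem_range] at hp
    rw [Sch_split p.1 p.2 hp.2 z w]
    ring
  rw [add_sub_right_comm, off]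
  rw [Finset.sum_mul_sum]
  rw [← Finset.sum_product']
  have splitQ := Finset.sum_filter_add_sum_filter_not ((range (d+1)) ×ˢ (range (d+1)))
    (fun p : ℕ × ℕ => p.2 < p.1) (fun p => a p.1 * z ^ p.1 * (a p.2 * w ^ p.2))
  rw [← splitQ]
  have splitR := Finset.sum_filter_add_sum_filter_not
    (((range (d+1)) ×ˢ (range (d+1))).filter (fun p : ℕ × ℕ => ¬ p.2 < p.1))
    (fun p : ℕ × ℕ => p.1 < p.2) (fun p => a p.1 * z ^ p.1 * (a p.2 * w ^ p.2))
  rw [← splitR]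
  have swapEq : ∑ p ∈ (((range (d+1)) ×ˢ (range (d+1))).filter (fun p : ℕ × ℕ => ¬ p.2 < p.1)).filter
        (fun p : ℕ × ℕ => p.1 < p.2), a p.1 * z ^ p.1 * (a p.2 * w ^ p.2)
      = ∑ p ∈ F2, a p.1 * a p.2 * (z ^ p.2 * w ^ p.1) := by
    apply Finset.sum_nbij' (i := fun p : ℕ × ℕ => (p.2, p.1)) (j := fun p : ℕ × ℕ => (p.2, p.1))
    · intro p hp
      simp only [hF2, mem_filter, mem_product, mem_range] at hp ⊢
      omega
    · intro q hq
      simp only [hF2, mem_filter, mem_product, mem_range] at hq ⊢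
      omega
    · intro p _; rfl
    · intro q _; rfl
    · intro p _; simp; ring
  rw [swapEq]
  have comb : ∑ p ∈ F2, a p.1 * z ^ p.1 * (a p.2 * w ^ p.2)
        + ∑ p ∈ F2, a p.1 * a p.2 * (z ^ p.2 * w ^ p.1)
      = ∑ p ∈ F2, a p.1 * a p.2 * (z ^ p.1 * w ^ p.2 + z ^ p.2 * w ^ p.1) := by
    rw [← Finset.sum_add_distrib]
    apply Finset.sum_congr rfl
    intro p _
    ring
  have diagEq : ∑ p ∈ ((range (d+1)) ×ˢ (range (d+1))).filter (fun p : ℕ × ℕ => ¬ p.2 < p.1) |>.filter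
        (fun p : ℕ × ℕ => ¬ p.1 < p.2), a p.1 * z ^ p.1 * (a p.2 * w ^ p.2)
      = ∑ p ∈ F0.filter (fun p => ¬ p.2 < p.1), a p.1 * a p.2 * (z ^ p.1 * w ^ p.2) := by
    rw [Finset.filter_filter]
    have : F0.filter (fun p => ¬ p.2 < p.1)
        = ((range (d+1)) ×ˢ (range (d+1))).filter (fun p : ℕ × ℕ => ¬ p.2 < p.1 ∧ ¬ p.1 < p.2) := by
      rw [hF0, Finset.filter_filter]
      apply Finset.filter_congr
      intro p _
      constructor
      · rintro ⟨h1, h2⟩; omega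
      · rintro ⟨h1, h2⟩; omega
    rw [this]
    apply Finset.sum_congr rfl
    intro p _
    ring
  rw [← hF2, ← comb, ← diagEq]
  ring

private lemma fwdKey (d : ℕ) (a : ℕ → ℝ) (hnn : ∀ k, 0 ≤ a k) (hdeg : ∀ k, d < k → a k = 0)
    (F : Finset (ℕ × ℕ)) (c : ℕ × ℕ → ℝ) (hc : ∀ p ∈ F, 0 ≤ c p)
    (hid : ∀ z w : ℝ,
      (∑ k ∈ Finset.range (d + 1), a k * z ^ k) * (∑ k ∈ Finset.range (d + 1), a k * w ^ k)
      = ∑ p ∈ F, c p * ∑ k ∈ Finset.Icc p.2 p.1, z ^ (p.1 + p.2 - k) * w ^ k) :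
    ∀ m n : ℕ, 1 ≤ n → n ≤ m → a (m + 1) * a (n - 1) ≤ a m * a n := by
  set N := (F.sup fun p => p.1) + d + 2 with hN
  have hN1 : ∀ p ∈ F, p.1 < N := by
    intro p hp
    have h : p.1 ≤ F.sup fun q : ℕ × ℕ => q.1 := Finset.le_sup hp
    omega
  set D : ℕ → ℕ → ℝ := fun i j => ∑ p ∈ F,
    if p.1 + p.2 = i + j ∧ p.2 ≤ j ∧ j ≤ p.1 then c p else 0 with hD
  have main : ∀ i < N, ∀ j < N, a i * a j - D i j = 0 := by
    apply polyExt
    intro z w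
    have e1 : ∑ i ∈ range N, ∑ j ∈ range N, (a i * a j - D i j) * z ^ i * w ^ j
        = (∑ i ∈ range N, ∑ j ∈ range N, a i * a j * z ^ i * w ^ j)
          - ∑ i ∈ range N, ∑ j ∈ range N, D i j * z ^ i * w ^ j := by
      rw [← Finset.sum_sub_distrib]
      apply Finset.sum_congr rfl
      intro i _
      rw [← Finset.sum_sub_distrib]
      apply Finset.sum_congr rfl
      intro j _
      ring
    have sub1 : ∀ (v : ℝ), ∑ k ∈ range (d+1), a k * v ^ k = ∑ k ∈ range N, a k * v ^ k := by
      intro v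
      apply Finset.sum_subset
      · intro x hx; rw [mem_range] at hx ⊢; omega
      · intro x _ hx; rw [mem_range] at hx
        rw [hdeg x (by omega)]; ring
    have e2 : ∑ i ∈ range N, ∑ j ∈ range N, a i * a j * z ^ i * w ^ j
        = (∑ k ∈ range (d+1), a k * z ^ k) * (∑ k ∈ range (d+1), a k * w ^ k) := by
      rw [sub1 z, sub1 w, Finset.sum_mul_sum]
      apply Finset.sum_congr rfl
      intro i _
      apply Finset.sum_congr rfl
      intro j _
      ring
    have e3 : ∑ i ∈ range N, ∑ j ∈ range N, D i j * z ^ i * w ^ j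
        = ∑ p ∈ F, c p * ∑ k ∈ Finset.Icc p.2 p.1, z ^ (p.1 + p.2 - k) * w ^ k := by
      have step : ∀ i ∈ range N, ∀ j ∈ range N, D i j * z ^ i * w ^ j
          = ∑ p ∈ F, (if p.1 + p.2 = i + j ∧ p.2 ≤ j ∧ j ≤ p.1 then c p * z ^ i * w ^ j else 0) := by
        intro i _ j _
        rw [hD]
        rw [Finset.sum_mul, Finset.sum_mul]
        apply Finset.sum_congr rfl
        intro p _
        split_ifs <;> ring
      rw [Finset.sum_congr rfl (fun i hi => Finset.sum_congr rfl (fun j hj => step i hi j hj))]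
      rw [Finset.sum_congr rfl (fun i (_ : i ∈ range N) => Finset.sum_comm)]
      rw [Finset.sum_comm]
      apply Finset.sum_congr rfl
      intro p hp
      rw [Finset.sum_comm]
      have inner : ∀ j ∈ range N,
          (∑ i ∈ range N, if p.1 + p.2 = i + j ∧ p.2 ≤ j ∧ j ≤ p.1 then c p * z ^ i * w ^ j else 0)
          = if j ∈ Finset.Icc p.2 p.1 then c p * z ^ (p.1 + p.2 - j) * w ^ j else 0 := by
        intro j _
        by_cases hj : p.2 ≤ j ∧ j ≤ p.1
        · rw [if_pos (mem_Icc.mpr hj)]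
          rw [Finset.sum_eq_single (p.1 + p.2 - j)]
          · rw [if_pos ⟨by omega, hj.1, hj.2⟩]
          · intro b _ hb
            rw [if_neg]
            rintro ⟨hb2, -, -⟩
            omega
          · intro habs
            exfalso
            apply habs
            rw [mem_range]
            have := hN1 p hp
            omega
        · rw [if_neg (fun hm => hj (mem_Icc.mp hm))]
          apply Finset.sum_eq_zero
          intro b _
          rw [if_neg]
          rintro ⟨-, h1, h2⟩
          exact hj ⟨h1, h2⟩
      rw [Finset.sum_congr rfl inner]
      rw [Finset.sum_ite_mem]
      have hsub : Finset.range N ∩ Finset.Icc p.2 p.1 = Finset.Icc p.2 p.1 := by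
        apply Finset.inter_eq_right.mpr
        intro x hx
        rw [mem_Icc] at hx
        rw [mem_range]
        have := hN1 p hp
        omega
      rw [hsub, Finset.mul_sum]
      apply Finset.sum_congr rfl
      intro k _
      ring
    rw [e1, e2, e3, hid z w, sub_self]
  intro m n hn hnm
  by_cases hmd : d < m + 1
  · rw [hdeg (m+1) hmd, zero_mul]
    exact mul_nonneg (hnn m) (hnn n)
  · push_neg at hmd
    have h1 : a (m+1) * a (n-1) = D (m+1) (n-1) := by
      have := main (m+1) (by omega) (n-1) (by omega)
      linarith
    have h2 : a m * a n = D m n := by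
      have := main m (by omega) n (by omega)
      linarith
    rw [h1, h2, hD]
    apply Finset.sum_le_sum
    intro p hp
    split_ifs with c1 c2
    · exact le_rfl
    · exfalso; omega
    · exact hc p hp
    · exact le_rfl

/-- `f(z)f(w)` is Schur positive (a nonnegative combination of two-variable Schur
polynomials `S_{(λ₁,λ₂)}(z,w) = ∑_{k=λ₂}^{λ₁} z^{λ₁+λ₂−k} w^k`) iff the coefficient
sequence of `f` is log-concave with no internal zeros. -/
theorem stmt3 (d : ℕ) (a : ℕ → ℝ) (hnn : ∀ k, 0 ≤ a k)
    (hdeg : ∀ k, d < k → a k = 0) :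
    (∃ (F : Finset (ℕ × ℕ)) (c : ℕ × ℕ → ℝ),
        (∀ p ∈ F, p.2 ≤ p.1) ∧ (∀ p ∈ F, 0 ≤ c p) ∧
        ∀ z w : ℝ,
          (∑ k ∈ Finset.range (d + 1), a k * z ^ k) *
            (∑ k ∈ Finset.range (d + 1), a k * w ^ k)
          = ∑ p ∈ F, c p * ∑ k ∈ Finset.Icc p.2 p.1, z ^ (p.1 + p.2 - k) * w ^ k)
      ↔ ((∀ i : ℕ, 1 ≤ i → a (i - 1) * a (i + 1) ≤ a i ^ 2) ∧
          ¬ ∃ i j k : ℕ, i < j ∧ j < k ∧ k ≤ d ∧ a i ≠ 0 ∧ a j = 0 ∧ a k ≠ 0) := by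
  constructor
  · rintro ⟨F, c, hF, hc, hid⟩
    have key := fwdKey d a hnn hdeg F c hc hid
    constructor
    · intro i hi
      have := key i i hi le_rfl
      calc a (i-1) * a (i+1) = a (i+1) * a (i-1) := mul_comm _ _
        _ ≤ a i * a i := this
        _ = a i ^ 2 := (sq (a i)).symm
    · rintro ⟨i, j, k, hij, hjk, hkd, hai, haj, hak⟩
      have chain := chainLem a key i k
      have hik : 0 < a k * a i :=
        mul_pos ((hnn k).lt_of_ne' hak) ((hnn i).lt_of_ne' hai)
      rcases le_total (k - j) (j - i) with h | h
      · have := chain (k - j) (by omega)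
        have ekj : k - (k - j) = j := by omega
        rw [ekj, haj, zero_mul] at this
        linarith
      · have := chain (j - i) (by omega)
        have eji : i + (j - i) = j := by omega
        rw [eji, haj, mul_zero] at this
        linarith
  · rintro ⟨hlc, hniz⟩
    refine ⟨((range (d+2)) ×ˢ (range (d+2))).filter (fun p => p.2 ≤ p.1),
      fun p => a p.1 * a p.2 - (if p.2 = 0 then 0 else a (p.1+1) * a (p.2-1)), ?_, ?_, ?_⟩
    · intro p hp
      rw [mem_filter] at hp
      exact hp.2
    · intro p hp
      show 0 ≤ a p.1 * a p.2 - (if p.2 = 0 then 0 else a (p.1+1) * a (p.2-1))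
      rcases eq_or_ne p.2 0 with h0 | h0
      · rw [if_pos h0, sub_zero]
        exact mul_nonneg (hnn _) (hnn _)
      · rw [if_neg h0]
        rw [mem_filter] at hp
        have := keyIneq d a hnn hdeg hlc hniz p.1 p.2 (by omega) hp.2
        linarith
    · intro z w
      have := revIdentity d a hdeg z w
      simpa only [Sch] using this
end

section
/- Let d, p ≥ 1 be integers and define a_k by Σ_k a_k t^k = (1 + t + ⋯ + t^d)^p. Then the polynomial q(z,w) = (1+z+⋯+z^d)^p (1+w+⋯+w^d)^p satisfies q(z,w) = Σ_{i,j ≥ 0} c_{ij} S_{(i+j,j)}(z,w), where c_{ij} = a_{i+j}a_j − a_{i+j+1}a_{j−1} (with a_k = 0 for k < 0 or k > dp), and all c_{ij} are nonnegative. In particular q(z,w) is Schur positive. -/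
open Polynomial Finset

noncomputable def ec (f : Polynomial ℝ) : ℤ → ℝ := fun k => if 0 ≤ k then f.coeff k.toNat else 0

def QQ (b : ℤ → ℝ) : Prop :=
  (∀ k, 0 ≤ b k) ∧ ∀ m j : ℤ, j ≤ m + 1 → b (m + 1) * b (j - 1) ≤ b m * b j

lemma ec_neg (f : Polynomial ℝ) {k : ℤ} (hk : k < 0) : ec f k = 0 := by
  simp [ec, not_le.2 hk]

lemma ec_big (f : Polynomial ℝ) {k : ℤ} (hk : (f.natDegree : ℤ) < k) : ec f k = 0 := by
  unfold ec
  split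
  · exact Polynomial.coeff_eq_zero_of_natDegree_lt (by omega)
  · rfl

lemma ec_coe (f : Polynomial ℝ) (n : ℕ) : ec f (n : ℤ) = f.coeff n := by
  simp [ec]

lemma spread {b : ℤ → ℝ} (hb : QQ b) {α β : ℤ} (h : α ≤ β) (s : ℕ) :
    b (α - s) * b (β + s) ≤ b α * b β := by
  induction s with
  | zero => simp
  | succ n ih =>
    have h1 := hb.2 (β + n) (α - n) (by omega)
    push_cast
    rw [show α - ((n : ℤ) + 1) = α - n - 1 from by ring,
        show β + ((n : ℤ) + 1) = β + n + 1 from by ring]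
    calc b (α - n - 1) * b (β + n + 1) = b (β + n + 1) * b (α - n - 1) := mul_comm _ _
      _ ≤ b (β + n) * b (α - n) := h1
      _ = b (α - n) * b (β + n) := mul_comm _ _
      _ ≤ b α * b β := ih

lemma spread' {b : ℤ → ℝ} (hb : QQ b) {α β s : ℤ} (h : α ≤ β) (hs : 0 ≤ s) :
    b (α - s) * b (β + s) ≤ b α * b β := by
  have := spread hb h s.toNat
  rwa [Int.toNat_of_nonneg hs] at this

lemma rep (f g : Polynomial ℝ) (n : ℤ) :
    ec (f * g) n = ∑ k ∈ Finset.Icc (0 : ℤ) (g.natDegree : ℤ), ec f (n - k) * ec g k := by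
  rcases lt_or_ge n 0 with hn | hn
  · rw [ec_neg _ hn]
    refine (Finset.sum_eq_zero fun k hk => ?_).symm
    simp only [Finset.mem_Icc] at hk
    rw [ec_neg f (by omega)]
    ring
  · have step1 : ec (f * g) n = ∑ k ∈ Finset.range (n.toNat + 1), f.coeff (n.toNat - k) * g.coeff k := by
      rw [show f * g = g * f from mul_comm f g,
          show ec (g * f) n = (g * f).coeff n.toNat from by simp [ec, hn],
          Polynomial.coeff_mul, Finset.Nat.sum_antidiagonal_eq_sum_range_succ_mk]
      exact Finset.sum_congr rfl fun k _ => mul_comm _ _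
    have step2 : ∑ k ∈ Finset.range (n.toNat + 1), f.coeff (n.toNat - k) * g.coeff k
        = ∑ k ∈ Finset.Icc (0 : ℤ) n, ec f (n - k) * ec g k := by
      refine Finset.sum_nbij' (fun k => (k : ℤ)) (fun k => k.toNat) ?_ ?_ ?_ ?_ ?_
      · intro k hk; simp only [Finset.mem_range] at hk; simp only [Finset.mem_Icc]; omega
      · intro k hk; simp only [Finset.mem_Icc] at hk; simp only [Finset.mem_range]; omega
      · intro k _; simp
      · intro k hk; simp only [Finset.mem_Icc] at hk
        simpa using Int.toNat_of_nonneg hk.1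
      · intro k hk
        simp only [Finset.mem_range] at hk
        rw [ec_coe g k, show n - (k : ℤ) = ((n.toNat - k : ℕ) : ℤ) from by omega, ec_coe]
    rw [step1, step2]
    have e1 : ∑ k ∈ Finset.Icc (0 : ℤ) n, ec f (n - k) * ec g k
        = ∑ k ∈ Finset.Icc (0 : ℤ) (max n (g.natDegree : ℤ)), ec f (n - k) * ec g k :=
      Finset.sum_subset (Finset.Icc_subset_Icc le_rfl (le_max_left _ _))
        (fun k hk hk' => by
          simp only [Finset.mem_Icc] at hk hk'
          rw [ec_neg f (by omega)]; ring)
    have e2 : ∑ k ∈ Finset.Icc (0 : ℤ) (g.natDegree : ℤ), ec f (n - k) * ec g k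
        = ∑ k ∈ Finset.Icc (0 : ℤ) (max n (g.natDegree : ℤ)), ec f (n - k) * ec g k :=
      Finset.sum_subset (Finset.Icc_subset_Icc le_rfl (le_max_right _ _))
        (fun k hk hk' => by
          simp only [Finset.mem_Icc] at hk hk'
          rw [ec_big g (by omega)]; ring)
    rw [e1, ← e2]

lemma sym_nonneg (S : Finset ℤ) (G : ℤ → ℤ → ℝ)
    (hdiag : ∀ k, G k k = 0)
    (hpair : ∀ k l : ℤ, k < l → 0 ≤ G k l + G l k) :
    0 ≤ ∑ k ∈ S, ∑ l ∈ S, G k l := by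
  have hcomm : ∑ k ∈ S, ∑ l ∈ S, G l k = ∑ k ∈ S, ∑ l ∈ S, G k l := Finset.sum_comm
  have h2 : ∑ k ∈ S, ∑ l ∈ S, (G k l + G l k) = 2 * ∑ k ∈ S, ∑ l ∈ S, G k l := by
    simp only [Finset.sum_add_distrib]
    rw [hcomm]; ring
  have h3 : 0 ≤ ∑ k ∈ S, ∑ l ∈ S, (G k l + G l k) :=
    Finset.sum_nonneg fun k _ => Finset.sum_nonneg fun l _ => by
      rcases lt_trichotomy k l with h | h | h
      · exact hpair k l h
      · subst h; simp [hdiag]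
      · have := hpair l k h; linarith
  linarith

lemma convQQ {f g : Polynomial ℝ} (hf : QQ (ec f)) (hg : QQ (ec g)) : QQ (ec (f * g)) := by
  set B : ℤ := (g.natDegree : ℤ) with hB
  set S : Finset ℤ := Finset.Icc (-1) (B + 1) with hS
  have hB0 : 0 ≤ B := by positivity
  have repS : ∀ n : ℤ, ec (f * g) n = ∑ k ∈ S, ec f (n - k) * ec g k := by
    intro n
    rw [rep]
    refine Finset.sum_subset (hS ▸ Finset.Icc_subset_Icc (by norm_num) (by omega)) ?_
    intro k hk hk'
    simp only [hS, Finset.mem_Icc] at hk hk'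
    rcases (by omega : k < 0 ∨ B < k) with h | h
    · rw [ec_neg g h]; ring
    · rw [ec_big g h]; ring
  have repS' : ∀ n : ℤ, ec (f * g) n = ∑ k ∈ S, ec f (n + 1 - k) * ec g (k - 1) := by
    intro n
    rw [rep]
    have h1 : ∑ k ∈ Finset.Icc (0 : ℤ) B, ec f (n - k) * ec g k
        = ∑ k ∈ Finset.Icc (1 : ℤ) (B + 1), ec f (n + 1 - k) * ec g (k - 1) := by
      rw [show Finset.Icc (1 : ℤ) (B + 1) = (Finset.Icc (0 : ℤ) B).map (addLeftEmbedding 1) from by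
            rw [Finset.map_add_left_Icc]; congr 1 <;> ring,
          Finset.sum_map]
      refine Finset.sum_congr rfl fun k _ => ?_
      simp only [addLeftEmbedding_apply]
      rw [show n + 1 - (1 + k) = n - k from by ring, show 1 + k - 1 = k from by ring]
    rw [h1]
    refine Finset.sum_subset (Finset.Icc_subset_Icc (by norm_num) le_rfl) ?_
    intro k hk hk'
    simp only [hS, Finset.mem_Icc] at hk hk'
    rw [ec_neg g (by omega)]; ring
  constructor
  · intro k
    rw [repS k]
    exact Finset.sum_nonneg fun k _ => mul_nonneg (hf.1 _) (hg.1 _)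
  · intro m j hjm
    rw [repS j, repS (m + 1), repS' m, repS' (j - 1)]
    have ej : ∀ k : ℤ, j - 1 + 1 - k = j - k := fun k => by ring
    simp only [ej]
    rw [← sub_nonneg, Finset.sum_mul_sum, Finset.sum_mul_sum, ← Finset.sum_sub_distrib]
    simp only [← Finset.sum_sub_distrib]
    refine sym_nonneg S _ (fun k => by ring) ?_
    intro k l hkl
    have hdetB : ec g (k - 1) * ec g l ≤ ec g k * ec g (l - 1) := by
      have := spread' hg (α := k) (β := l - 1) (s := 1) (by omega) (by norm_num)
      calc ec g (k - 1) * ec g l = ec g (k - 1) * ec g (l - 1 + 1) := by rw [show l - 1 + 1 = l from by ring]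
        _ ≤ ec g k * ec g (l - 1) := this
    have hdetA : ec f (j - l) * ec f (m + 1 - k) ≤ ec f (j - k) * ec f (m + 1 - l) := by
      rcases le_total (j - k) (m + 1 - l) with hc | hc
      · have h0 := spread' hf (α := j - k) (β := m + 1 - l) (s := l - k) hc (by omega)
        calc ec f (j - l) * ec f (m + 1 - k)
            = ec f (j - k - (l - k)) * ec f (m + 1 - l + (l - k)) := by
              rw [show j - k - (l - k) = j - l from by ring, show m + 1 - l + (l - k) = m + 1 - k from by ring]
          _ ≤ ec f (j - k) * ec f (m + 1 - l) := h0
      · have h0 := spread' hf (α := m + 1 - l) (β := j - k) (s := m + 1 - j) hc (by omega)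
        calc ec f (j - l) * ec f (m + 1 - k)
            = ec f (m + 1 - l - (m + 1 - j)) * ec f (j - k + (m + 1 - j)) := by
              rw [show m + 1 - l - (m + 1 - j) = j - l from by ring, show j - k + (m + 1 - j) = m + 1 - k from by ring]
          _ ≤ ec f (m + 1 - l) * ec f (j - k) := h0
          _ = ec f (j - k) * ec f (m + 1 - l) := mul_comm _ _
    have hprod := mul_nonneg (sub_nonneg.2 hdetA) (sub_nonneg.2 hdetB)
    calc (0:ℝ) ≤ (ec f (j - k) * ec f (m + 1 - l) - ec f (j - l) * ec f (m + 1 - k))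
          * (ec g k * ec g (l - 1) - ec g (k - 1) * ec g l) := hprod
      _ = (ec f (m + 1 - k) * ec g (k - 1) * (ec f (j - l) * ec g l)
            - ec f (m + 1 - k) * ec g k * (ec f (j - l) * ec g (l - 1)))
          + (ec f (m + 1 - l) * ec g (l - 1) * (ec f (j - k) * ec g k)
            - ec f (m + 1 - l) * ec g l * (ec f (j - k) * ec g (k - 1))) := by ring

lemma QQ_geom (d : ℕ) : QQ (ec (∑ i ∈ Finset.range (d + 1), (X : Polynomial ℝ) ^ i)) := by
  have hcoeff : ∀ k : ℤ, ec (∑ i ∈ Finset.range (d + 1), (X : Polynomial ℝ) ^ i) k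
      = if 0 ≤ k ∧ k ≤ (d : ℤ) then 1 else 0 := by
    intro k
    unfold ec
    by_cases hk : 0 ≤ k
    · rw [if_pos hk]
      have h1 : (∑ i ∈ Finset.range (d + 1), (X : Polynomial ℝ) ^ i).coeff k.toNat
          = if k.toNat < d + 1 then 1 else 0 := by
        simp [Polynomial.finset_sum_coeff, Polynomial.coeff_X_pow]
      rw [h1]
      split_ifs <;> first | rfl | omega
    · rw [if_neg hk, if_neg (by omega)]
  constructor
  · intro k; rw [hcoeff]; split_ifs <;> norm_num
  · intro m j hjm
    rw [hcoeff, hcoeff, hcoeff, hcoeff]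
    split_ifs <;> first | (exfalso; omega) | norm_num

lemma QQ_pow (d p : ℕ) : QQ (ec ((∑ i ∈ Finset.range (d + 1), (X : Polynomial ℝ) ^ i) ^ p)) := by
  induction p with
  | zero =>
    simp only [pow_zero]
    have h1 : ∀ k : ℤ, ec 1 k = if k = 0 then 1 else 0 := by
      intro k
      unfold ec
      simp only [Polynomial.coeff_one]
      split_ifs <;> first | rfl | omega
    constructor
    · intro k; rw [h1]; split_ifs <;> norm_num
    · intro m j hjm
      rw [h1, h1, h1, h1]
      split_ifs <;> first | (exfalso; omega) | norm_num
  | succ n ih =>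
    rw [pow_succ]
    exact convQQ ih (QQ_geom d)

lemma tri_sum (n : ℕ) (f : ℕ → ℕ → ℝ) :
    ∑ i ∈ Finset.range (n + 1), ∑ t ∈ Finset.Icc 0 i, f i t
    = ∑ q ∈ (Finset.range (n + 1) ×ˢ Finset.range (n + 1)).filter (fun q => q.2 ≤ q.1),
        f q.1 q.2 := by
  calc ∑ i ∈ Finset.range (n + 1), ∑ t ∈ Finset.Icc 0 i, f i t
      = ∑ i ∈ Finset.range (n + 1), ∑ t ∈ Finset.range (n + 1), if t ≤ i then f i t else 0 := by
        refine Finset.sum_congr rfl fun i hi => ?_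
        simp only [Finset.mem_range] at hi
        rw [← Finset.sum_filter]
        congr 1
        ext t
        simp only [Finset.mem_filter, Finset.mem_Icc, Finset.mem_range]
        omega
    _ = ∑ q ∈ (Finset.range (n + 1) ×ˢ Finset.range (n + 1)),
          if q.2 ≤ q.1 then f q.1 q.2 else 0 := (Finset.sum_product' _ _ _).symm
    _ = ∑ q ∈ (Finset.range (n + 1) ×ˢ Finset.range (n + 1)).filter (fun q => q.2 ≤ q.1),
          f q.1 q.2 := by rw [Finset.sum_filter]

/-- With `a_k` the coefficients of `(1+t+⋯+t^d)^p` (and `a_k = 0` for `k < 0` or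
`k > dp`), the constants `c_{ij} = a_{i+j}a_j − a_{i+j+1}a_{j−1}` are nonnegative and
`(1+z+⋯+z^d)^p (1+w+⋯+w^d)^p = ∑_{i,j} c_{ij} S_{(i+j,j)}(z,w)`,
where `S_{(i+j,j)}(z,w) = ∑_{k=j}^{i+j} z^{i+2j−k} w^k`. -/
theorem stmt4 (d p : ℕ) (hd : 1 ≤ d) (hp : 1 ≤ p) (a : ℤ → ℝ)
    (ha0 : ∀ k : ℤ, k < 0 ∨ (d * p : ℤ) < k → a k = 0)
    (ha : ∀ t : ℝ, (∑ i ∈ Finset.range (d + 1), t ^ i) ^ p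
      = ∑ k ∈ Finset.range (d * p + 1), a k * t ^ k) :
    (∀ i j : ℕ, 0 ≤ a ((i : ℤ) + j) * a j - a ((i : ℤ) + j + 1) * a ((j : ℤ) - 1)) ∧
    ∀ z w : ℝ,
      (∑ i ∈ Finset.range (d + 1), z ^ i) ^ p * (∑ i ∈ Finset.range (d + 1), w ^ i) ^ p
        = ∑ i ∈ Finset.range (d * p + 1), ∑ j ∈ Finset.range (d * p + 1),
            (a ((i : ℤ) + j) * a j - a ((i : ℤ) + j + 1) * a ((j : ℤ) - 1)) *
              ∑ k ∈ Finset.Icc j (i + j), z ^ (i + 2 * j - k) * w ^ k := by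
  classical
  set N := d * p with hN
  have hNZ : ((d : ℤ) * p) = (N : ℤ) := by rw [hN]; push_cast; ring
  set F : Polynomial ℝ := (∑ i ∈ Finset.range (d + 1), (X : Polynomial ℝ) ^ i) ^ p with hF
  have hdegF : F.natDegree ≤ N := by
    rw [hF, Polynomial.natDegree_pow]
    have h1 : (∑ i ∈ Finset.range (d + 1), (X : Polynomial ℝ) ^ i).natDegree ≤ d :=
      Polynomial.natDegree_sum_le_of_forall_le _ _ (fun i hi => by
        simpa using Nat.lt_succ_iff.mp (Finset.mem_range.mp hi))
    calc p * (∑ i ∈ Finset.range (d + 1), (X : Polynomial ℝ) ^ i).natDegree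
        ≤ p * d := Nat.mul_le_mul_left p h1
      _ = N := by rw [hN, Nat.mul_comm]
  have hFeq : F = ∑ k ∈ Finset.range (N + 1), Polynomial.C (a k) * X ^ k := by
    apply Polynomial.funext
    intro t
    simp only [hF, Polynomial.eval_pow, Polynomial.eval_finset_sum, Polynomial.eval_X,
      Polynomial.eval_mul, Polynomial.eval_C]
    exact ha t
  have hak : ∀ k : ℤ, a k = ec F k := by
    intro k
    rcases lt_or_ge k 0 with hk | hk
    · rw [ha0 k (Or.inl hk), ec_neg _ hk]
    · rcases le_or_gt k (N : ℤ) with hk2 | hk2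
      · have h2 : ec F k = F.coeff k.toNat := by simp [ec, hk]
        rw [h2, hFeq, Polynomial.finset_sum_coeff]
        simp only [Polynomial.coeff_C_mul, Polynomial.coeff_X_pow, mul_ite, mul_one, mul_zero]
        rw [Finset.sum_ite_eq (Finset.range (N + 1)) k.toNat (fun j => a (j : ℤ))]
        rw [if_pos (Finset.mem_range.mpr (by omega))]
        congr 1
        omega
      · rw [ha0 k (Or.inr (by rw [hNZ]; omega)), ec_big F (by omega)]
  have hQ := QQ_pow d p
  rw [← hF] at hQ
  constructor
  · intro i j
    have h2 := hQ.2 ((i : ℤ) + j) j (by omega)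
    rw [hak ((i : ℤ) + j), hak (j : ℤ), hak ((i : ℤ) + j + 1), hak ((j : ℤ) - 1)]
    linarith
  · intro z w
    have step1 : ∀ i j : ℕ,
        (a ((i : ℤ) + j) * a j - a ((i : ℤ) + j + 1) * a ((j : ℤ) - 1)) *
            ∑ k ∈ Finset.Icc j (i + j), z ^ (i + 2 * j - k) * w ^ k
        = ∑ t ∈ Finset.Icc 0 i,
            (a ((i : ℤ) + j) * a j - a ((i : ℤ) + j + 1) * a ((j : ℤ) - 1)) *
              (z ^ (i - t + j) * w ^ (t + j)) := by
      intro i j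
      rw [Finset.mul_sum,
          show Finset.Icc j (i + j) = (Finset.Icc 0 i).map (addLeftEmbedding j) from by
            rw [Finset.map_add_left_Icc]; congr 1 <;> omega,
          Finset.sum_map]
      refine Finset.sum_congr rfl fun t ht => ?_
      simp only [Finset.mem_Icc] at ht
      simp only [addLeftEmbedding_apply]
      rw [show i + 2 * j - (j + t) = i - t + j from by omega, show j + t = t + j from by omega]
    have step2 : ∀ j : ℕ, j ≤ N →
        (∑ i ∈ Finset.range (N + 1), ∑ t ∈ Finset.Icc 0 i,
          (a ((i : ℤ) + j) * a j - a ((i : ℤ) + j + 1) * a ((j : ℤ) - 1)) *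
            (z ^ (i - t + j) * w ^ (t + j)))
        = ∑ U ∈ Finset.range (2 * N + 1), ∑ V ∈ Finset.range (2 * N + 1),
            if j ≤ U ∧ j ≤ V ∧ U + V ≤ N + 2 * j then
              (a ((U : ℤ) + V - j) * a j - a ((U : ℤ) + V - j + 1) * a ((j : ℤ) - 1)) *
                (z ^ U * w ^ V)
            else 0 := by
      intro j hj
      have right2 : (∑ q ∈ (Finset.range (2 * N + 1) ×ˢ Finset.range (2 * N + 1)).filter
            (fun q => j ≤ q.1 ∧ j ≤ q.2 ∧ q.1 + q.2 ≤ N + 2 * j),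
            (a ((q.1 : ℤ) + q.2 - j) * a j - a ((q.1 : ℤ) + q.2 - j + 1) * a ((j : ℤ) - 1)) *
              (z ^ q.1 * w ^ q.2))
          = ∑ U ∈ Finset.range (2 * N + 1), ∑ V ∈ Finset.range (2 * N + 1),
            if j ≤ U ∧ j ≤ V ∧ U + V ≤ N + 2 * j then
              (a ((U : ℤ) + V - j) * a j - a ((U : ℤ) + V - j + 1) * a ((j : ℤ) - 1)) *
                (z ^ U * w ^ V)
            else 0 := by
        rw [Finset.sum_filter]
        exact Finset.sum_product' _ _ (fun U V =>
          if j ≤ U ∧ j ≤ V ∧ U + V ≤ N + 2 * j then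
            (a ((U : ℤ) + V - j) * a j - a ((U : ℤ) + V - j + 1) * a ((j : ℤ) - 1)) *
              (z ^ U * w ^ V)
          else 0)
      refine Eq.trans (tri_sum N (fun i t =>
        (a ((i : ℤ) + j) * a j - a ((i : ℤ) + j + 1) * a ((j : ℤ) - 1)) *
          (z ^ (i - t + j) * w ^ (t + j)))) (Eq.trans ?_ right2)
      refine Finset.sum_nbij' (fun q => (q.1 - q.2 + j, q.2 + j))
        (fun q => (q.1 + q.2 - 2 * j, q.2 - j)) ?_ ?_ ?_ ?_ ?_
      · intro q hq
        simp only [Finset.mem_filter, Finset.mem_product, Finset.mem_range] at hq ⊢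
        omega
      · intro q hq
        simp only [Finset.mem_filter, Finset.mem_product, Finset.mem_range] at hq ⊢
        omega
      · intro q hq
        simp only [Finset.mem_filter, Finset.mem_product, Finset.mem_range] at hq
        dsimp only
        exact Prod.ext (by omega) (by omega)
      · intro q hq
        simp only [Finset.mem_filter, Finset.mem_product, Finset.mem_range] at hq
        dsimp only
        exact Prod.ext (by omega) (by omega)
      · intro q hq
        simp only [Finset.mem_filter, Finset.mem_product, Finset.mem_range] at hq
        rw [show ((q.1 - q.2 + j : ℕ) : ℤ) + ((q.2 + j : ℕ) : ℤ) - (j : ℤ) = (q.1 : ℤ) + j from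
          by omega]
    have step3 : ∀ U V : ℕ, U ≤ 2 * N → V ≤ 2 * N →
        (∑ j ∈ Finset.range (N + 1),
          if j ≤ U ∧ j ≤ V ∧ U + V ≤ N + 2 * j then
            (a ((U : ℤ) + V - j) * a j - a ((U : ℤ) + V - j + 1) * a ((j : ℤ) - 1)) *
              (z ^ U * w ^ V)
          else 0)
        = (a U * z ^ U) * (a V * w ^ V) := by
      intro U V hU hV
      set m := min (min U V) N with hm
      have key : ∀ j ∈ Finset.range (N + 1),
          (if j ≤ U ∧ j ≤ V ∧ U + V ≤ N + 2 * j then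
            (a ((U : ℤ) + V - j) * a j - a ((U : ℤ) + V - j + 1) * a ((j : ℤ) - 1)) *
              (z ^ U * w ^ V)
          else 0)
          = (if j ∈ Finset.range (m + 1) then
            (a ((U : ℤ) + V - j) * a j - a ((U : ℤ) + V - j + 1) * a ((j : ℤ) - 1)) *
              (z ^ U * w ^ V)
          else 0) := by
        intro j hj
        simp only [Finset.mem_range] at hj ⊢
        by_cases h1 : j ≤ U ∧ j ≤ V ∧ U + V ≤ N + 2 * j
        · rw [if_pos h1, if_pos (by omega)]
        · rw [if_neg h1]
          by_cases h2 : j < m + 1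
          · rw [if_pos h2]
            have z1 : a ((U : ℤ) + V - j) = 0 := ha0 _ (Or.inr (by rw [hNZ]; omega))
            have z2 : a ((U : ℤ) + V - j + 1) = 0 := ha0 _ (Or.inr (by rw [hNZ]; omega))
            rw [z1, z2]; ring
          · rw [if_neg h2]
      have gsucc : ∀ j : ℕ, a ((U : ℤ) + V + 1 - ((j + 1 : ℕ) : ℤ)) * a (((j + 1 : ℕ) : ℤ) - 1)
          = a ((U : ℤ) + V - j) * a j := by
        intro j
        rw [show ((U : ℤ) + V + 1 - ((j + 1 : ℕ) : ℤ)) = (U : ℤ) + V - j from by push_cast; ring,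
            show (((j + 1 : ℕ) : ℤ) - 1) = (j : ℤ) from by push_cast; ring]
      have tele : ∑ j ∈ Finset.range (m + 1),
          (a ((U : ℤ) + V - j) * a j - a ((U : ℤ) + V - j + 1) * a ((j : ℤ) - 1)) *
            (z ^ U * w ^ V)
          = ((fun j : ℕ => a ((U : ℤ) + V + 1 - j) * a ((j : ℤ) - 1)) (m + 1)
            - (fun j : ℕ => a ((U : ℤ) + V + 1 - j) * a ((j : ℤ) - 1)) 0) * (z ^ U * w ^ V) := by
        rw [← Finset.sum_range_sub (fun j : ℕ => a ((U : ℤ) + V + 1 - j) * a ((j : ℤ) - 1)) (m + 1),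
            Finset.sum_mul]
        refine Finset.sum_congr rfl fun j _ => ?_
        rw [gsucc j, show ((U : ℤ) + V - j + 1) = (U : ℤ) + V + 1 - j from by ring]
      rw [Finset.sum_congr rfl key, Finset.sum_ite_mem,
          show Finset.range (N + 1) ∩ Finset.range (m + 1) = Finset.range (m + 1) from by
            ext x; simp only [Finset.mem_inter, Finset.mem_range]; omega,
          tele]
      dsimp only
      have h0 : a (((0 : ℕ) : ℤ) - 1) = 0 := ha0 _ (Or.inl (by norm_num))
      rw [h0, gsucc m]
      have hcase : (m = U ∧ U ≤ V ∧ U ≤ N) ∨ (m = V ∧ V ≤ U ∧ V ≤ N)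
          ∨ (m = N ∧ N < U ∧ N < V) := by omega
      rcases hcase with ⟨h1, h2, h3⟩ | ⟨h1, h2, h3⟩ | ⟨h1, h2, h3⟩
      · rw [h1, show ((U : ℤ) + V - U) = (V : ℤ) from by ring]; ring
      · rw [h1, show ((U : ℤ) + V - V) = (U : ℤ) from by ring]; ring
      · rw [h1, ha0 ((U : ℤ) + V - N) (Or.inr (by rw [hNZ]; omega)),
            ha0 (U : ℤ) (Or.inr (by rw [hNZ]; omega))]
        ring
    rw [ha z, ha w, Finset.sum_mul_sum]
    symm
    calc ∑ i ∈ Finset.range (N + 1), ∑ j ∈ Finset.range (N + 1),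
          (a ((i : ℤ) + j) * a j - a ((i : ℤ) + j + 1) * a ((j : ℤ) - 1)) *
            ∑ k ∈ Finset.Icc j (i + j), z ^ (i + 2 * j - k) * w ^ k
        = ∑ j ∈ Finset.range (N + 1), ∑ i ∈ Finset.range (N + 1),
            (a ((i : ℤ) + j) * a j - a ((i : ℤ) + j + 1) * a ((j : ℤ) - 1)) *
              ∑ k ∈ Finset.Icc j (i + j), z ^ (i + 2 * j - k) * w ^ k := Finset.sum_comm
      _ = ∑ j ∈ Finset.range (N + 1), ∑ i ∈ Finset.range (N + 1), ∑ t ∈ Finset.Icc 0 i,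
            (a ((i : ℤ) + j) * a j - a ((i : ℤ) + j + 1) * a ((j : ℤ) - 1)) *
              (z ^ (i - t + j) * w ^ (t + j)) :=
          Finset.sum_congr rfl fun j _ => Finset.sum_congr rfl fun i _ => step1 i j
      _ = ∑ j ∈ Finset.range (N + 1), ∑ U ∈ Finset.range (2 * N + 1),
            ∑ V ∈ Finset.range (2 * N + 1),
            if j ≤ U ∧ j ≤ V ∧ U + V ≤ N + 2 * j then
              (a ((U : ℤ) + V - j) * a j - a ((U : ℤ) + V - j + 1) * a ((j : ℤ) - 1)) *
                (z ^ U * w ^ V)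
            else 0 :=
          Finset.sum_congr rfl fun j hj => step2 j (by
            simpa using Nat.lt_succ_iff.mp (Finset.mem_range.mp hj))
      _ = ∑ U ∈ Finset.range (2 * N + 1), ∑ j ∈ Finset.range (N + 1),
            ∑ V ∈ Finset.range (2 * N + 1),
            if j ≤ U ∧ j ≤ V ∧ U + V ≤ N + 2 * j then
              (a ((U : ℤ) + V - j) * a j - a ((U : ℤ) + V - j + 1) * a ((j : ℤ) - 1)) *
                (z ^ U * w ^ V)
            else 0 := Finset.sum_comm
      _ = ∑ U ∈ Finset.range (2 * N + 1), ∑ V ∈ Finset.range (2 * N + 1),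
            ∑ j ∈ Finset.range (N + 1),
            if j ≤ U ∧ j ≤ V ∧ U + V ≤ N + 2 * j then
              (a ((U : ℤ) + V - j) * a j - a ((U : ℤ) + V - j + 1) * a ((j : ℤ) - 1)) *
                (z ^ U * w ^ V)
            else 0 := Finset.sum_congr rfl fun U _ => Finset.sum_comm
      _ = ∑ U ∈ Finset.range (2 * N + 1), ∑ V ∈ Finset.range (2 * N + 1),
            (a U * z ^ U) * (a V * w ^ V) :=
          Finset.sum_congr rfl fun U hU => Finset.sum_congr rfl fun V hV =>
            step3 U V (by simpa using Nat.lt_succ_iff.mp (Finset.mem_range.mp hU))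
              (by simpa using Nat.lt_succ_iff.mp (Finset.mem_range.mp hV))
      _ = ∑ U ∈ Finset.range (2 * N + 1), ∑ V ∈ Finset.range (N + 1),
            (a U * z ^ U) * (a V * w ^ V) := by
          refine Finset.sum_congr rfl fun U _ => ?_
          refine (Finset.sum_subset (Finset.range_subset_range.mpr (by omega)) ?_).symm
          intro V _ hV
          simp only [Finset.mem_range, not_lt] at hV
          rw [ha0 (V : ℤ) (Or.inr (by rw [hNZ]; omega))]
          simp
      _ = ∑ U ∈ Finset.range (N + 1), ∑ V ∈ Finset.range (N + 1),
            (a U * z ^ U) * (a V * w ^ V) := by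
          refine (Finset.sum_subset (Finset.range_subset_range.mpr (by omega)) ?_).symm
          intro U _ hU
          simp only [Finset.mem_range, not_lt] at hU
          refine Finset.sum_eq_zero fun V _ => ?_
          rw [ha0 (U : ℤ) (Or.inr (by rw [hNZ]; omega))]
          simp
end

section
/- The coefficients of (1 + T + ⋯ + T^d)^p are log-concave and have no internal zeros; that is, if (1+T+⋯+T^d)^p = Σ_{k=0}^{dp} a_k T^k, then a_k > 0 for all 0 ≤ k ≤ dp and a_k² ≥ a_{k−1}a_{k+1} for all 1 ≤ k ≤ dp−1. -/
open Finset Polynomial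

def LC (f : ℤ → ℝ) : Prop :=
  ∀ w x y z : ℤ, w + z = x + y → w ≤ x → x ≤ y → y ≤ z → f w * f z ≤ f x * f y

lemma term_nonneg (a b : ℤ → ℝ) (hPa : LC a) (hPb : LC b) (δ : ℤ) (hδ : 0 ≤ δ)
    (x z : ℤ) (hxz : x ≤ z) (k k' : ℤ) (hk : k ≤ k') :
    0 ≤ (a k * a (k' - δ) - a (k - δ) * a k') *
      (b (x - k) * b (z - k') - b (x - k') * b (z - k)) := by
  have hF : a (k - δ) * a k' ≤ a k * a (k' - δ) := by
    rcases le_or_gt k (k' - δ) with h | h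
    · exact hPa (k - δ) k (k' - δ) k' (by omega) (by omega) h (by omega)
    · have := hPa (k - δ) (k' - δ) k k' (by omega) (by omega) (by omega) (by omega)
      linarith [this]
  have hG : b (x - k') * b (z - k) ≤ b (x - k) * b (z - k') := by
    rcases le_or_gt (x - k) (z - k') with h | h
    · exact hPb (x - k') (x - k) (z - k') (z - k) (by omega) (by omega) h (by omega)
    · have := hPb (x - k') (z - k') (x - k) (z - k) (by omega) (by omega) (by omega) (by omega)
      linarith [this]
  exact mul_nonneg (by linarith) (by linarith)

lemma LC_conv (a b : ℤ → ℝ) (sa : Finset ℤ) (ha0 : ∀ i ∉ sa, a i = 0)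
    (hPa : LC a) (hPb : LC b) :
    LC (fun x => ∑ k ∈ sa, a k * b (x - k)) := by
  intro w x y z hsum hwx hxy hyz
  simp only
  set δ := x - w with hδdef
  have hδ : 0 ≤ δ := by omega
  have hz : z = y + δ := by omega
  have hxz : x ≤ z := by omega
  set T := sa ∪ sa.image (· + δ) with hT
  have hsub : sa ⊆ T := Finset.subset_union_left
  have hext : ∀ t : ℤ, ∑ k ∈ sa, a k * b (t - k) = ∑ k ∈ T, a k * b (t - k) := fun t =>
    Finset.sum_subset hsub (fun i _ hi => by rw [ha0 i hi]; ring)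
  have hshift : ∀ t : ℤ, ∑ k ∈ sa, a k * b (t - k) = ∑ k ∈ T, a (k - δ) * b (t + δ - k) := by
    intro t
    have himg : ∑ k ∈ T, a (k - δ) * b (t + δ - k)
        = ∑ m ∈ T.image (· - δ), a m * b (t - m) := by
      rw [Finset.sum_image (by intro u _ v _ h; have h' : u - δ = v - δ := h; omega)]
      refine Finset.sum_congr rfl fun k _ => ?_
      congr 1
      · congr 1; omega
    rw [himg]
    refine Finset.sum_subset ?_ (fun i _ hi => by rw [ha0 i hi]; ring)
    intro i hi
    refine Finset.mem_image.2 ⟨i + δ, ?_, by omega⟩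
    exact Finset.mem_union_right _ (Finset.mem_image.2 ⟨i, hi, rfl⟩)
  have key : (∑ k ∈ T, a k * b (x - k)) * (∑ k' ∈ T, a (k' - δ) * b (z - k'))
      - (∑ k ∈ T, a (k - δ) * b (x - k)) * (∑ k' ∈ T, a k' * b (z - k'))
      = ∑ k ∈ T, ∑ k' ∈ T,
        (a k * a (k' - δ) - a (k - δ) * a k') * (b (x - k) * b (z - k')) := by
    rw [Finset.sum_mul_sum, Finset.sum_mul_sum, ← Finset.sum_sub_distrib]
    refine Finset.sum_congr rfl fun k _ => ?_
    rw [← Finset.sum_sub_distrib]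
    exact Finset.sum_congr rfl fun k' _ => by ring
  have hswap : (∑ k ∈ T, ∑ k' ∈ T,
        (a k * a (k' - δ) - a (k - δ) * a k') * (b (x - k) * b (z - k')))
      = ∑ k ∈ T, ∑ k' ∈ T,
        (a k' * a (k - δ) - a (k' - δ) * a k) * (b (x - k') * b (z - k)) :=
    Finset.sum_comm
  have hterm : ∀ k k' : ℤ, 0 ≤ (a k * a (k' - δ) - a (k - δ) * a k') *
      (b (x - k) * b (z - k') - b (x - k') * b (z - k)) := by
    intro k k'
    rcases le_total k k' with h | h
    · exact term_nonneg a b hPa hPb δ hδ x z hxz k k' h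
    · have := term_nonneg a b hPa hPb δ hδ x z hxz k' k h
      nlinarith [this]
  have h2 : 0 ≤ 2 * (∑ k ∈ T, ∑ k' ∈ T,
      (a k * a (k' - δ) - a (k - δ) * a k') * (b (x - k) * b (z - k'))) := by
    have : 2 * (∑ k ∈ T, ∑ k' ∈ T,
        (a k * a (k' - δ) - a (k - δ) * a k') * (b (x - k) * b (z - k')))
        = ∑ k ∈ T, ∑ k' ∈ T,
          (a k * a (k' - δ) - a (k - δ) * a k') *
            (b (x - k) * b (z - k') - b (x - k') * b (z - k)) := by
      rw [two_mul]
      nth_rewrite 2 [hswap]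
      rw [← Finset.sum_add_distrib]
      refine Finset.sum_congr rfl fun k _ => ?_
      rw [← Finset.sum_add_distrib]
      exact Finset.sum_congr rfl fun k' _ => by ring
    rw [this]
    exact Finset.sum_nonneg fun k _ => Finset.sum_nonneg fun k' _ => hterm k k'
  have hcx := hext x
  have hcz := hext z
  have hcw := hshift w
  have hcy := hshift y
  rw [show w + δ = x by omega] at hcw
  rw [show y + δ = z by omega] at hcy
  rw [hcx, hcy, hcw, hcz]
  nlinarith [key, h2]

def uu (d : ℕ) : ℤ → ℝ := fun i => if 0 ≤ i ∧ i ≤ (d : ℤ) then 1 else 0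

noncomputable def cp (d : ℕ) : ℕ → ℤ → ℝ
  | 0 => fun i => if i = 0 then 1 else 0
  | n + 1 => fun x => ∑ k ∈ Finset.Icc (0 : ℤ) (d : ℤ), uu d k * cp d n (x - k)

lemma uu_nonneg (d : ℕ) (i : ℤ) : 0 ≤ uu d i := by
  unfold uu; split_ifs <;> norm_num

lemma cp_nonneg (d : ℕ) : ∀ n i, 0 ≤ cp d n i := by
  intro n
  induction n with
  | zero => intro i; unfold cp; split_ifs <;> norm_num
  | succ m ih =>
    intro i
    unfold cp
    exact Finset.sum_nonneg fun k _ => mul_nonneg (uu_nonneg d k) (ih _)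

lemma cp_zero_of_neg (d : ℕ) : ∀ (n : ℕ) (i : ℤ), i < 0 → cp d n i = 0 := by
  intro n
  induction n with
  | zero => intro i hi; unfold cp; rw [if_neg (by omega)]
  | succ m ih =>
    intro i hi
    unfold cp
    refine Finset.sum_eq_zero fun k hk => ?_
    rw [ih (i - k) (by simp only [Finset.mem_Icc] at hk; omega), mul_zero]

lemma cp_pos (d : ℕ) (hd : 1 ≤ d) : ∀ (n : ℕ) (i : ℤ), 0 ≤ i → i ≤ (d : ℤ) * (n : ℤ) → 0 < cp d n i := by
  intro n
  induction n with
  | zero => intro i h1 h2; unfold cp; rw [if_pos (by omega)]; norm_num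
  | succ m ih =>
    intro i h1 h2
    unfold cp
    set k0 : ℤ := max 0 (i - (d : ℤ) * m) with hk0
    have hk0mem : k0 ∈ Finset.Icc (0 : ℤ) (d : ℤ) := by
      simp only [Finset.mem_Icc]
      constructor
      · omega
      · have : i ≤ (d : ℤ) * m + d := by push_cast at h2 ⊢; nlinarith
        omega
    have hpos : 0 < uu d k0 * cp d m (i - k0) := by
      have h1' : uu d k0 = 1 := by
        unfold uu
        rw [if_pos]
        simp only [Finset.mem_Icc] at hk0mem
        exact ⟨hk0mem.1, hk0mem.2⟩
      rw [h1', one_mul]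
      have hdm : (0:ℤ) ≤ (d : ℤ) * (m : ℤ) := by positivity
      have h3 : i - (d : ℤ) * (m : ℤ) ≤ k0 := le_max_right _ _
      have h4 : (0:ℤ) ≤ k0 := le_max_left _ _
      refine ih (i - k0) (by omega) (by omega)
    calc (0:ℝ) < uu d k0 * cp d m (i - k0) := hpos
    _ ≤ _ := Finset.single_le_sum (fun k _ => mul_nonneg (uu_nonneg d k) (cp_nonneg d m _)) hk0mem

lemma LC_uu (d : ℕ) : LC (uu d) := by
  intro w x y z hs h1 h2 h3
  by_cases hw : (0 ≤ w ∧ w ≤ (d : ℤ)) ∧ (0 ≤ z ∧ z ≤ (d : ℤ))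
  · unfold uu
    rw [if_pos hw.1, if_pos hw.2, if_pos (by omega), if_pos (by omega)]
  · have h0 : uu d w * uu d z = 0 := by
      unfold uu
      rcases not_and_or.1 hw with h | h
      · rw [if_neg h, zero_mul]
      · rw [if_neg h, mul_zero]
    rw [h0]
    exact mul_nonneg (uu_nonneg d x) (uu_nonneg d y)

lemma LC_delta : LC (fun i : ℤ => if i = 0 then (1:ℝ) else 0) := by
  intro w x y z hs h1 h2 h3
  by_cases hw : w = 0 ∧ z = 0
  · obtain ⟨hw0, hz0⟩ := hw
    have hx : x = 0 := by omega
    have hy : y = 0 := by omega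
    simp [hw0, hz0, hx, hy]
  · have h0 : (if w = 0 then (1:ℝ) else 0) * (if z = 0 then (1:ℝ) else 0) = 0 := by
      rcases not_and_or.1 hw with h | h
      · rw [if_neg h, zero_mul]
      · rw [if_neg h, mul_zero]
    simp only at h0 ⊢
    rw [h0]
    split_ifs <;> norm_num

lemma coeff_S (d : ℕ) (j : ℕ) :
    (∑ i ∈ range (d + 1), (Polynomial.X : ℝ[X]) ^ i).coeff j
      = if j ≤ d then 1 else 0 := by
  rw [Polynomial.finset_sum_coeff]
  simp only [Polynomial.coeff_X_pow]
  rw [Finset.sum_ite_eq (range (d + 1)) j (fun _ => (1:ℝ))]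
  simp [Nat.lt_succ_iff]

lemma coeff_S_pow (d : ℕ) : ∀ (n k : ℕ),
    ((∑ i ∈ range (d + 1), (Polynomial.X : ℝ[X]) ^ i) ^ n).coeff k = cp d n (k : ℤ) := by
  intro n
  induction n with
  | zero =>
    intro k
    simp only [pow_zero, Polynomial.coeff_one, cp]
    simp [Nat.cast_eq_zero, eq_comm]
  | succ m ih =>
    intro k
    rw [pow_succ', Polynomial.coeff_mul, Finset.Nat.sum_antidiagonal_eq_sum_range_succ_mk]
    simp only [coeff_S, ih]
    set N := max d k with hN
    have hA : ∑ i ∈ range (k + 1), (if i ≤ d then (1:ℝ) else 0) * cp d m (((k - i : ℕ)) : ℤ)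
        = ∑ i ∈ range (N + 1), (if i ≤ d then (1:ℝ) else 0) * cp d m ((k : ℤ) - (i : ℤ)) := by
      rw [Finset.sum_congr rfl (fun i hi => ?_)]
      · refine Finset.sum_subset (by intro i hi; simp only [mem_range] at *; omega) ?_
        intro i hi hni
        simp only [mem_range] at hi hni
        rw [cp_zero_of_neg d m _ (by omega), mul_zero]
      · simp only [mem_range] at hi
        congr 2
        omega
    have hB : ∑ q ∈ Finset.Icc (0 : ℤ) (d : ℤ), uu d q * cp d m ((k : ℤ) - q)
        = ∑ i ∈ range (N + 1), (if i ≤ d then (1:ℝ) else 0) * cp d m ((k : ℤ) - (i : ℤ)) := by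
      rw [show ∑ q ∈ Finset.Icc (0 : ℤ) (d : ℤ), uu d q * cp d m ((k : ℤ) - q)
          = ∑ i ∈ range (d + 1), uu d (i : ℤ) * cp d m ((k : ℤ) - (i : ℤ)) from ?_]
      · rw [Finset.sum_congr rfl (fun i hi => ?_)]
        · refine Finset.sum_subset (by intro i hi; simp only [mem_range] at *; omega) ?_
          intro i hi hni
          simp only [mem_range] at hi hni
          rw [if_neg (by omega), zero_mul]
        · simp only [mem_range] at hi
          congr 1
          unfold uu
          rw [if_pos (by constructor <;> omega)]
          rw [if_pos (by omega)]
      · refine Finset.sum_nbij' (fun q => q.toNat) (fun i => (i : ℤ)) ?_ ?_ ?_ ?_ ?_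
        · intro q hq; simp only [Finset.mem_Icc] at hq; simp only [mem_range]; omega
        · intro i hi; simp only [mem_range] at hi; simp only [Finset.mem_Icc]; omega
        · intro q hq; simp only [Finset.mem_Icc] at hq
          simp only [Int.toNat_of_nonneg hq.1]
        · intro i _; simp
        · intro q hq
          simp only [Finset.mem_Icc] at hq
          simp only [Int.toNat_of_nonneg hq.1]
    rw [hA, show cp d (m + 1) (k : ℤ) = ∑ q ∈ Finset.Icc (0 : ℤ) (d : ℤ),
        uu d q * cp d m ((k : ℤ) - q) from rfl, hB]


lemma LC_cp (d : ℕ) : ∀ n, LC (cp d n) := by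
  intro n
  induction n with
  | zero => exact LC_delta
  | succ m ih =>
    exact LC_conv (uu d) (cp d m) (Finset.Icc 0 (d : ℤ))
      (fun i hi => by
        unfold uu
        rw [if_neg (by simpa [Finset.mem_Icc] using hi)])
      (LC_uu d) ih



/-- The coefficients of `(1+T+⋯+T^d)^p` are positive (hence no internal zeros)
and log-concave. -/
theorem stmt5 (d p : ℕ) (hd : 1 ≤ d) (hp : 1 ≤ p) (a : ℕ → ℝ)
    (ha : ∀ t : ℝ, (∑ i ∈ Finset.range (d + 1), t ^ i) ^ p
      = ∑ k ∈ Finset.range (d * p + 1), a k * t ^ k) :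
    (∀ k ≤ d * p, 0 < a k) ∧
    (∀ k : ℕ, 1 ≤ k → k ≤ d * p - 1 → a (k - 1) * a (k + 1) ≤ a k ^ 2) := by
  set S : Polynomial ℝ := ∑ i ∈ range (d + 1), Polynomial.X ^ i with hS
  set Q : Polynomial ℝ := ∑ k ∈ range (d * p + 1), Polynomial.C (a k) * Polynomial.X ^ k with hQ
  have hpq : S ^ p = Q := by
    apply Polynomial.funext
    intro t
    rw [hS, hQ]
    simp only [Polynomial.eval_pow, Polynomial.eval_finset_sum, Polynomial.eval_X,
      Polynomial.eval_mul, Polynomial.eval_C, Polynomial.eval_pow]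
    exact ha t
  have hcoef : ∀ k ≤ d * p, a k = cp d p (k : ℤ) := by
    intro k hk
    have h1 : (S ^ p).coeff k = cp d p (k : ℤ) := coeff_S_pow d p k
    rw [hpq] at h1
    rw [← h1, hQ, Polynomial.finset_sum_coeff]
    simp only [Polynomial.coeff_C_mul, Polynomial.coeff_X_pow]
    rw [Finset.sum_congr rfl (fun i _ => by rw [mul_ite, mul_one, mul_zero])]
    rw [Finset.sum_ite_eq (range (d * p + 1)) k a]
    rw [if_pos (by simp only [mem_range]; omega)]
  have hdp : 1 ≤ d * p := Nat.one_le_iff_ne_zero.2 (by positivity)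
  constructor
  · intro k hk
    rw [hcoef k hk]
    refine cp_pos d hd p (k : ℤ) (by positivity) ?_
    have : (k : ℤ) ≤ ((d * p : ℕ) : ℤ) := by exact_mod_cast hk
    push_cast at this ⊢
    linarith
  · intro k hk1 hk2
    have hk3 : k + 1 ≤ d * p := by omega
    have hkm : k - 1 ≤ d * p := by omega
    rw [hcoef (k - 1) hkm, hcoef (k + 1) hk3, hcoef k (by omega)]
    have hcast1 : ((k - 1 : ℕ) : ℤ) = (k : ℤ) - 1 := by omega
    have hcast2 : ((k + 1 : ℕ) : ℤ) = (k : ℤ) + 1 := by push_cast; ring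
    rw [hcast1, hcast2, sq]
    exact LC_cp d p ((k : ℤ) - 1) k k ((k : ℤ) + 1) (by ring) (by omega) le_rfl (by omega)
end

section
/- Let f(z) = Σ_k a_k z^k be a polynomial of degree D with real coefficients. Then f(z)f(w) = Σ_{r=0}^{2D} Σ_{i=⌈r/2⌉}^{r} (a_i a_{r−i} − a_{i+1} a_{r−i−1}) S_{(i, r−i)}(z,w), where S_{(λ₁,λ₂)}(z,w) = Σ_{k=λ₂}^{λ₁} z^{λ₁+λ₂−k}w^k and a_k = 0 for k < 0 or k > D. -/
private lemma tel7 (b : ℕ → ℝ) (M r : ℕ) (h : M ≤ r) :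
    ∑ i ∈ Finset.Icc M r, (b i - b (i + 1)) = b M - b (r + 1) := by
  induction r, h using Nat.le_induction with
  | base => simp
  | succ r hr ih =>
      rw [Finset.sum_Icc_succ_top (by omega), ih]
      ring

/-- Expansion of `f(z)f(w)` in the two-variable Schur basis:
`f(z)f(w) = ∑_{r=0}^{2D} ∑_{i=⌈r/2⌉}^{r} (a_i a_{r−i} − a_{i+1} a_{r−i−1}) S_{(i,r−i)}(z,w)`,
where `a_k = 0` for `k < 0` or `k > D`, and
`S_{(i,r−i)}(z,w) = ∑_{k=r−i}^{i} z^{r−k} w^k`. -/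
theorem stmt7 (D : ℕ) (a : ℤ → ℝ) (haD : a (D : ℤ) ≠ 0)
    (ha : ∀ k : ℤ, k < 0 ∨ (D : ℤ) < k → a k = 0) :
    ∀ z w : ℝ,
      (∑ k ∈ Finset.range (D + 1), a k * z ^ k) *
        (∑ k ∈ Finset.range (D + 1), a k * w ^ k)
      = ∑ r ∈ Finset.range (2 * D + 1), ∑ i ∈ Finset.Icc ((r + 1) / 2) r,
          (a i * a ((r : ℤ) - i) - a ((i : ℤ) + 1) * a ((r : ℤ) - i - 1)) *
            ∑ k ∈ Finset.Icc (r - i) i, z ^ (r - k) * w ^ k := by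
  intro z w
  have haN : ∀ k : ℕ, D < k → a (k : ℤ) = 0 := fun k hk => ha k (Or.inr (by exact_mod_cast hk))
  set n := 2 * D + 1 with hn
  -- Step 1: simplify the inner sums by telescoping
  have key : ∀ r ∈ Finset.range n,
      (∑ i ∈ Finset.Icc ((r + 1) / 2) r,
          (a i * a ((r : ℤ) - i) - a ((i : ℤ) + 1) * a ((r : ℤ) - i - 1)) *
            ∑ k ∈ Finset.Icc (r - i) i, z ^ (r - k) * w ^ k)
      = ∑ k ∈ Finset.range (r + 1), a k * a ((r : ℤ) - k) * (z ^ (r - k) * w ^ k) := by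
    intro r _
    -- distribute
    have h1 : ∀ i : ℕ,
        (a i * a ((r : ℤ) - i) - a ((i : ℤ) + 1) * a ((r : ℤ) - i - 1)) *
            ∑ k ∈ Finset.Icc (r - i) i, z ^ (r - k) * w ^ k
        = ∑ k ∈ Finset.Icc (r - i) i,
            (a i * a ((r : ℤ) - i) - a ((i : ℤ) + 1) * a ((r : ℤ) - i - 1)) *
              (z ^ (r - k) * w ^ k) := fun i => Finset.mul_sum _ _ _
    simp only [h1]
    rw [Finset.sum_comm' (t' := Finset.range (r + 1))
        (s' := fun k => Finset.Icc (max k (r - k)) r)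
        (by intro i k; simp only [Finset.mem_Icc, Finset.mem_range]; omega)]
    refine Finset.sum_congr rfl fun k hk => ?_
    rw [Finset.mem_range] at hk
    have hk' : k ≤ r := by omega
    rw [← Finset.sum_mul]
    congr 1
    have hb : ∀ i : ℕ,
        a i * a ((r : ℤ) - i) - a ((i : ℤ) + 1) * a ((r : ℤ) - i - 1)
        = (fun j : ℕ => a j * a ((r : ℤ) - j)) i
          - (fun j : ℕ => a j * a ((r : ℤ) - j)) (i + 1) := by
      intro i; push_cast; ring_nf
    simp only [hb]
    rw [tel7 _ _ _ (by omega)]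
    have hz : a ((r + 1 : ℕ) : ℤ) * a ((r : ℤ) - ((r + 1 : ℕ) : ℤ)) = 0 := by
      have : a ((r : ℤ) - ((r + 1 : ℕ) : ℤ)) = 0 := ha _ (Or.inl (by push_cast; omega))
      rw [this, mul_zero]
    rw [hz, sub_zero]
    rcases le_total (r - k) k with h | h
    · have : max k (r - k) = k := by omega
      rw [this]
    · have : max k (r - k) = r - k := by omega
      rw [this]
      have h2 : ((r - k : ℕ) : ℤ) = (r : ℤ) - k := by omega
      rw [h2]
      have h3 : (r : ℤ) - ((r : ℤ) - k) = (k : ℤ) := by ring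
      rw [h3, mul_comm]
  rw [Finset.sum_congr rfl key]
  -- Step 2: the RHS triangle sum as a square sum
  have step2 :
      (∑ r ∈ Finset.range n, ∑ k ∈ Finset.range (r + 1),
        a k * a ((r : ℤ) - k) * (z ^ (r - k) * w ^ k))
      = ∑ k ∈ Finset.range n, ∑ j ∈ Finset.range n,
          a k * a j * (z ^ j * w ^ k) := by
    rw [Finset.sum_comm' (t' := Finset.range n)
        (s' := fun k => Finset.Icc k (n - 1))
        (by intro r k; simp only [Finset.mem_Icc, Finset.mem_range]; omega)]
    refine Finset.sum_congr rfl fun k hk => ?_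
    rw [Finset.mem_range] at hk
    rw [show Finset.Icc k (n - 1) = Finset.Ico k n by
      ext x; simp only [Finset.mem_Icc, Finset.mem_Ico]; omega]
    rw [Finset.sum_Ico_eq_sum_range]
    have hrw : ∀ j ∈ Finset.range (n - k),
        a k * a (((k + j : ℕ) : ℤ) - k) * (z ^ (k + j - k) * w ^ k)
        = a k * a (j : ℤ) * (z ^ j * w ^ k) := by
      intro j _
      congr 2
      · congr 1; push_cast; ring
      · congr 1; omega
    rw [Finset.sum_congr rfl hrw]
    refine Finset.sum_subset (by intro j; simp only [Finset.mem_range]; omega) ?_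
    intro j hj hj'
    rw [Finset.mem_range] at hj hj'
    have : D < k ∨ D < j := by omega
    rcases this with h | h
    · rw [haN k h]; ring
    · rw [haN j h]; ring
  rw [step2]
  -- Step 3: the LHS as the same square sum
  have extend : ∀ g : ℕ → ℝ, (∀ j, D < j → g j = 0) →
      ∑ j ∈ Finset.range (D + 1), g j = ∑ j ∈ Finset.range n, g j := by
    intro g hg
    refine Finset.sum_subset (by intro j; simp only [Finset.mem_range]; omega) ?_
    intro j hj hj'
    rw [Finset.mem_range] at hj hj'
    exact hg j (by omega)
  have sq : ∀ g : ℕ → ℕ → ℝ, (∀ i j, D < i ∨ D < j → g i j = 0) →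
      ∑ i ∈ Finset.range (D + 1), ∑ j ∈ Finset.range (D + 1), g i j
      = ∑ i ∈ Finset.range n, ∑ j ∈ Finset.range n, g i j := by
    intro g hg
    have inner : ∀ i, ∑ j ∈ Finset.range (D + 1), g i j = ∑ j ∈ Finset.range n, g i j :=
      fun i => extend _ (fun j hj => hg i j (Or.inr hj))
    rw [Finset.sum_congr rfl fun i _ => inner i]
    exact extend _ (fun i hi => Finset.sum_eq_zero fun j _ => hg i j (Or.inl hi))
  rw [Finset.sum_mul_sum]
  rw [sq _ (by
    intro i j h
    rcases h with h | h
    · rw [haN i h]; ring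
    · rw [haN j h]; ring)]
  rw [Finset.sum_comm]
  refine Finset.sum_congr rfl fun k _ => Finset.sum_congr rfl fun j _ => by ring
end
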